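/- arXiv:0912.4437 — 5 statements merged into one kernel-verified Lean document; each statement's English description precedes it below -/
import Mathlib

section
/- Let β : [0,∞) → [0,1) be a function such that for every sequence (t_n) of nonnegative reals, β(t_n) → 1 implies t_n → 0. Let (a_n) be a sequence of positive real numbers satisfying a_{n+1} ≤ β(a_n) · a_n for all n. Then the sequence (a_n) is decreasing and converges to 0. -/
/-- If `β : [0,∞) → [0,1)` satisfies the Geraghty condition and `(aₙ)` is a sequence of
positive reals with `a_{n+1} ≤ β aₙ * aₙ`, then `(aₙ)` is (strictly) decreasing and
converges to `0`. -/
theorem geraghty_orbit_distances_to_zero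
    (β : ℝ → ℝ)
    (hβ_mem : ∀ t, 0 ≤ t → 0 ≤ β t ∧ β t < 1)
    (hβ_S : ∀ t : ℕ → ℝ, (∀ n, 0 ≤ t n) →
      Filter.Tendsto (fun n => β (t n)) Filter.atTop (nhds 1) →
      Filter.Tendsto t Filter.atTop (nhds 0))
    (a : ℕ → ℝ) (ha_pos : ∀ n, 0 < a n)
    (ha_rec : ∀ n, a (n + 1) ≤ β (a n) * a n) :
    StrictAnti a ∧ Filter.Tendsto a Filter.atTop (nhds 0) := by
  have hanti : StrictAnti a := by
    apply strictAnti_nat_of_succ_lt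
    intro n
    calc a (n + 1) ≤ β (a n) * a n := ha_rec n
      _ < 1 * a n := by
          exact mul_lt_mul_of_pos_right ((hβ_mem (a n) (ha_pos n).le).2) (ha_pos n)
      _ = a n := one_mul _
  refine ⟨hanti, ?_⟩
  -- a converges to its infimum L ≥ 0
  have hbdd : BddBelow (Set.range a) := ⟨0, by rintro x ⟨n, rfl⟩; exact (ha_pos n).le⟩
  set L := ⨅ n, a n with hL
  have hLa : ∀ n, L ≤ a n := fun n => ciInf_le hbdd n
  have hL0 : 0 ≤ L := le_ciInf fun n => (ha_pos n).le
  have htend : Filter.Tendsto a Filter.atTop (nhds L) :=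
    tendsto_atTop_ciInf hanti.antitone hbdd
  rcases eq_or_lt_of_le hL0 with h0 | hLpos
  · rwa [← h0] at htend
  · exfalso
    have htend' : Filter.Tendsto (fun n => a (n + 1)) Filter.atTop (nhds L) :=
      htend.comp (Filter.tendsto_add_atTop_nat 1)
    have hratio : Filter.Tendsto (fun n => a (n + 1) / a n) Filter.atTop (nhds 1) := by
      have := htend'.div htend (ne_of_gt hLpos)
      rw [div_self (ne_of_gt hLpos)] at this; exact this
    have hβtend : Filter.Tendsto (fun n => β (a n)) Filter.atTop (nhds 1) := by
      apply tendsto_of_tendsto_of_tendsto_of_le_of_le hratio tendsto_const_nhds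
      · intro n
        rw [div_le_iff₀ (ha_pos n)]
        exact ha_rec n
      · intro n
        exact ((hβ_mem (a n) (ha_pos n).le).2).le
    have := hβ_S a (fun n => (ha_pos n).le) hβtend
    have : L = 0 := tendsto_nhds_unique htend this
    exact absurd this (ne_of_gt hLpos)
end

section
/- Let ℓ^∞ be the Banach space of all bounded real sequences with the supremum norm, let (e_n) be its canonical basis, let (τ_n) be the sequence defined by τ_1 = 1/2 and τ_{n+1} = (1 − τ_n) τ_n, and put x_n = τ_n e_n and X_n = {x_n, x_{n+1}, x_{n+2}, ...}. Then for all positive integers m > n, the Hausdorff distance (with respect to the supremum norm metric) between X_{m+1} and X_{n+1} equals τ_{n+1}. -/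
/-- With `τ₁ = 1/2`, `τ_{n+1} = (1 - τₙ) τₙ`, `eₙ` the canonical basis of `ℓ^∞`,
`xₙ = τₙ eₙ` and `Xₙ = {x_k : k ≥ n}`, the Hausdorff distance between `X_{m+1}` and
`X_{n+1}` equals `τ_{n+1}` for all `m > n ≥ 1`. -/
theorem hausdorffDist_Xm_Xn_eq_tau
    (τ : ℕ → ℝ) (hτ1 : τ 1 = 1 / 2)
    (hτ_rec : ∀ n, 1 ≤ n → τ (n + 1) = (1 - τ n) * τ n)
    (e : ℕ → lp (fun _ : ℕ => ℝ) ⊤) (he : ∀ n, e n = lp.single ⊤ n (1 : ℝ))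
    (x : ℕ → lp (fun _ : ℕ => ℝ) ⊤) (hx : ∀ n, x n = τ n • e n)
    (XS : ℕ → Set (lp (fun _ : ℕ => ℝ) ⊤)) (hXS : ∀ n, XS n = {y | ∃ k, n ≤ k ∧ y = x k}) :
    ∀ m n, 1 ≤ n → n < m →
      Metric.hausdorffDist (XS (m + 1)) (XS (n + 1)) = τ (n + 1) := by
  -- basic bounds on τ
  have hτbnd : ∀ n, 1 ≤ n → 0 < τ n ∧ τ n ≤ 1 / 2 := by
    intro n hn
    induction n with
    | zero => omega
    | succ k ih =>
      rcases Nat.eq_zero_or_pos k with hk | hk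
      · subst hk; rw [hτ1]; norm_num
      · obtain ⟨h1, h2⟩ := ih hk
        rw [hτ_rec k hk]
        constructor
        · have : (0:ℝ) < 1 - τ k := by linarith
          positivity
        · nlinarith
  have hstep : ∀ k, 1 ≤ k → τ (k + 1) ≤ τ k := by
    intro k hk
    obtain ⟨h1, h2⟩ := hτbnd k hk
    rw [hτ_rec k hk]; nlinarith
  have hmono : ∀ j k, 1 ≤ j → j ≤ k → τ k ≤ τ j := by
    intro j k hj hjk
    induction k with
    | zero => omega
    | succ i ih =>
      rcases Nat.lt_or_ge j (i+1) with h | h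
      · have hij : j ≤ i := by omega
        have hi1 : 1 ≤ i := by omega
        exact le_trans (hstep i hi1) (ih hij)
      · have : j = i + 1 := by omega
        subst this; exact le_refl _
  -- coordinates of x
  have hxapp : ∀ j i, (x j : ℕ → ℝ) i = if i = j then τ j else 0 := by
    intro j i
    rw [hx j, he j, lp.coeFn_smul, Pi.smul_apply, lp.single_apply]
    by_cases h : i = j
    · simp [h]
    · simp [h]
  -- distance between distinct basis points
  have hdist : ∀ j k, 1 ≤ j → 1 ≤ k → j ≠ k → dist (x j) (x k) = max (τ j) (τ k) := by
    intro j k hj hk hjk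
    have hj0 : 0 ≤ τ j := (hτbnd j hj).1.le
    have hk0 : 0 ≤ τ k := (hτbnd k hk).1.le
    have happ : ∀ i, ((x j - x k : lp (fun _ : ℕ => ℝ) ⊤) : ℕ → ℝ) i
        = (if i = j then τ j else 0) - (if i = k then τ k else 0) := by
      intro i
      rw [lp.coeFn_sub, Pi.sub_apply, hxapp, hxapp]
    rw [dist_eq_norm]
    apply le_antisymm
    · apply lp.norm_le_of_forall_le (le_max_of_le_left hj0)
      intro i
      rw [happ]
      by_cases h1 : i = j
      · subst h1; rw [if_pos rfl, if_neg hjk, sub_zero, Real.norm_of_nonneg hj0]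
        exact le_max_left _ _
      · by_cases h2 : i = k
        · subst h2; rw [if_neg h1, if_pos rfl, zero_sub, norm_neg, Real.norm_of_nonneg hk0]
          exact le_max_right _ _
        · rw [if_neg h1, if_neg h2, sub_zero, norm_zero]; exact le_max_of_le_left hj0
    · apply max_le
      · have := lp.norm_apply_le_norm ENNReal.top_ne_zero (x j - x k) j
        rwa [happ j, if_pos rfl, if_neg hjk, sub_zero, Real.norm_of_nonneg hj0] at this
      · have := lp.norm_apply_le_norm ENNReal.top_ne_zero (x j - x k) k
        rwa [happ k, if_neg (Ne.symm hjk), if_pos rfl, zero_sub, norm_neg,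
          Real.norm_of_nonneg hk0] at this
  intro m n hn hnm
  have hτn1 := hτbnd (n+1) (by omega)
  -- XS facts
  have hmem : ∀ N k, N ≤ k → x k ∈ XS N := by
    intro N k h; rw [hXS]; exact ⟨k, h, rfl⟩
  have hsub : XS (m+1) ⊆ XS (n+1) := by
    rw [hXS, hXS]
    rintro y ⟨k, hk, rfl⟩
    exact ⟨k, by omega, rfl⟩
  -- boundedness: everything is within distance max τ's of x (n+1); easier: norm bounded
  have hbdd : ∀ N, 1 ≤ N → Bornology.IsBounded (XS N) := by
    intro N hN
    apply Bornology.IsBounded.subset (Metric.isBounded_closedBall (x := (0 : lp (fun _ : ℕ => ℝ) ⊤)) (r := 1/2))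
    rw [hXS]
    rintro y ⟨k, hk, rfl⟩
    rw [Metric.mem_closedBall, dist_zero_right]
    apply lp.norm_le_of_forall_le (by norm_num)
    intro i
    rw [hxapp]
    by_cases h : i = k
    · rw [if_pos h, Real.norm_eq_abs, abs_of_nonneg (hτbnd k (by omega)).1.le]
      exact (hτbnd k (by omega)).2
    · rw [if_neg h, norm_zero]; norm_num
  have hne : ∀ N, (XS N).Nonempty := fun N => ⟨x N, hmem N N le_rfl⟩
  have hfin : EMetric.hausdorffEdist (XS (m+1)) (XS (n+1)) ≠ ⊤ :=
    Metric.hausdorffEdist_ne_top_of_nonempty_of_bounded (hne _) (hne _)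
      (hbdd _ (by omega)) (hbdd _ (by omega))
  apply le_antisymm
  · -- upper bound
    apply Metric.hausdorffDist_le_of_infDist hτn1.1.le
    · intro a ha
      rw [Metric.infDist_zero_of_mem (hsub ha)]
      exact hτn1.1.le
    · intro b hb
      rw [hXS] at hb
      obtain ⟨k, hk, rfl⟩ := hb
      rcases Nat.lt_or_ge k (m+1) with h | h
      · calc Metric.infDist (x k) (XS (m+1)) ≤ dist (x k) (x (m+1)) :=
              Metric.infDist_le_dist_of_mem (hmem _ _ le_rfl)
          _ = max (τ k) (τ (m+1)) := hdist k (m+1) (by omega) (by omega) (by omega)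
          _ ≤ τ (n+1) := by
              apply max_le (hmono (n+1) k (by omega) hk)
              exact le_trans (hmono (n+1) (m+1) (by omega) (by omega)) le_rfl
      · rw [Metric.infDist_zero_of_mem (hmem _ _ h)]
        exact hτn1.1.le
  · -- lower bound
    have hkey : Metric.infDist (x (n+1)) (XS (m+1)) = τ (n+1) := by
      apply le_antisymm
      · calc Metric.infDist (x (n+1)) (XS (m+1)) ≤ dist (x (n+1)) (x (m+1)) :=
              Metric.infDist_le_dist_of_mem (hmem _ _ le_rfl)
          _ = max (τ (n+1)) (τ (m+1)) := hdist _ _ (by omega) (by omega) (by omega)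
          _ = τ (n+1) := max_eq_left (hmono (n+1) (m+1) (by omega) (by omega))
      · by_contra h
        push_neg at h
        obtain ⟨y, hy, hdy⟩ := (Metric.infDist_lt_iff (hne _)).1 h
        rw [hXS] at hy
        obtain ⟨k, hk, rfl⟩ := hy
        rw [hdist _ _ (by omega) (by omega) (by omega)] at hdy
        exact absurd hdy (not_lt.2 (le_max_left _ _))
    calc τ (n+1) = Metric.infDist (x (n+1)) (XS (m+1)) := hkey.symm
      _ ≤ Metric.hausdorffDist (XS (n+1)) (XS (m+1)) :=
          Metric.infDist_le_hausdorffDist_of_mem (hmem _ _ le_rfl)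
            (by rwa [EMetric.hausdorffEdist_comm])
      _ = Metric.hausdorffDist (XS (m+1)) (XS (n+1)) := Metric.hausdorffDist_comm
end

section
/- Let (τ_n) be the sequence defined by τ_1 = 1/2 and τ_{n+1} = (1 − τ_n) τ_n, let x_n = τ_n e_n in ℓ^∞, let X_n = {x_k : k ≥ n}, let X = X_1, and define T : X → CB(X) by T x_n = X_{n+1}. Define α : [0,∞) → [0,1) by α(t) = 1 − τ_n if t = τ_n for some positive integer n, and α(t) = 0 otherwise. Then for all x, y ∈ X, H(Tx, Ty) ≤ α(d(x,y)) · d(x,y), where d is the supremum-norm metric and H the induced Hausdorff metric; in particular, for all m > n one has H(T x_m, T x_n) = τ_{n+1} = α(d(x_m, x_n)) · d(x_m, x_n). -/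
/-- With `τ₁ = 1/2`, `τ_{n+1} = (1 - τₙ) τₙ`, `xₙ = τₙ eₙ` in `ℓ^∞`,
`Xₙ = {x_k : k ≥ n}`, `T xₙ = X_{n+1}` and `α(t) = 1 - τₙ` if `t = τₙ` (for some `n ≥ 1`)
and `α(t) = 0` otherwise, the mapping `T` satisfies the Geraghty-type contraction
`H(Tx, Ty) ≤ α(d(x,y)) · d(x,y)` for all `x, y ∈ X = X₁`; in particular, for `m > n ≥ 1`,
`H(T xₘ, T xₙ) = τ_{n+1} = α(d(xₘ,xₙ)) · d(xₘ,xₙ)`. -/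
theorem example_satisfies_geraghty_contraction
    (τ : ℕ → ℝ) (hτ1 : τ 1 = 1 / 2)
    (hτ_rec : ∀ n, 1 ≤ n → τ (n + 1) = (1 - τ n) * τ n)
    (e : ℕ → lp (fun _ : ℕ => ℝ) ⊤) (he : ∀ n, e n = lp.single ⊤ n (1 : ℝ))
    (x : ℕ → lp (fun _ : ℕ => ℝ) ⊤) (hx : ∀ n, x n = τ n • e n)
    (XS : ℕ → Set (lp (fun _ : ℕ => ℝ) ⊤)) (hXS : ∀ n, XS n = {y | ∃ k, n ≤ k ∧ y = x k})
    (α : ℝ → ℝ)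
    (hα_tau : ∀ n, 1 ≤ n → α (τ n) = 1 - τ n)
    (hα_other : ∀ t : ℝ, (∀ n, 1 ≤ n → t ≠ τ n) → α t = 0) :
    (∀ m n, 1 ≤ m → 1 ≤ n →
      Metric.hausdorffDist (XS (m + 1)) (XS (n + 1)) ≤
        α (dist (x m) (x n)) * dist (x m) (x n)) ∧
    (∀ m n, 1 ≤ n → n < m →
      Metric.hausdorffDist (XS (m + 1)) (XS (n + 1)) = τ (n + 1) ∧
        τ (n + 1) = α (dist (x m) (x n)) * dist (x m) (x n)) := by
  -- positivity and bound
  have hpos : ∀ n, 1 ≤ n → 0 < τ n ∧ τ n ≤ 1 / 2 := by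
    intro n hn
    induction n with
    | zero => omega
    | succ k ih =>
      rcases Nat.lt_or_ge 1 (k + 1) with h | h
      · have hk : 1 ≤ k := by omega
        obtain ⟨h1, h2⟩ := ih hk
        rw [hτ_rec k hk]
        constructor <;> nlinarith
      · have : k + 1 = 1 := by omega
        rw [this, hτ1]; norm_num
  -- antitone
  have hanti : ∀ n k, 1 ≤ n → n ≤ k → τ k ≤ τ n := by
    intro n k hn hnk
    induction k with
    | zero => omega
    | succ j ih =>
      rcases Nat.lt_or_ge n (j + 1) with h | h
      · have hj : 1 ≤ j := by omega
        have h1 := (hpos j hj).1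
        have h2 := (hpos j hj).2
        have : τ (j + 1) ≤ τ j := by rw [hτ_rec j hj]; nlinarith
        exact this.trans (ih (by omega))
      · have : n = j + 1 := by omega
        rw [this]
  -- coordinates
  have hcoord : ∀ m i : ℕ, (x m : ∀ _ : ℕ, ℝ) i = if i = m then τ m else 0 := by
    intro m i
    rw [hx, he, lp.coeFn_smul, Pi.smul_apply, lp.single_apply]
    by_cases h : i = m <;> simp [h]
  -- distance
  have hdist : ∀ m n, 1 ≤ n → n < m → dist (x m) (x n) = τ n := by
    intro m n hn hnm
    rw [dist_eq_norm]
    have hτn := hpos n hn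
    have hτm := hpos m (by omega)
    apply le_antisymm
    · apply lp.norm_le_of_forall_le hτn.1.le
      intro i
      rw [lp.coeFn_sub, Pi.sub_apply, hcoord, hcoord]
      by_cases h1 : i = m
      · subst h1
        rw [if_pos rfl, if_neg (show ¬ i = n by omega), sub_zero,
          Real.norm_eq_abs, abs_of_pos hτm.1]
        exact hanti n i hn (by omega)
      · by_cases h2 : i = n
        · subst h2
          rw [if_neg h1, if_pos rfl, zero_sub, norm_neg,
            Real.norm_eq_abs, abs_of_pos hτn.1]
        · rw [if_neg h1, if_neg h2, sub_zero, norm_zero]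
          exact hτn.1.le
    · have := lp.norm_apply_le_norm ENNReal.top_ne_zero (x m - x n) n
      rw [lp.coeFn_sub, Pi.sub_apply, hcoord, hcoord,
        if_neg (show ¬ n = m by omega), if_pos rfl, zero_sub, norm_neg,
        Real.norm_eq_abs, abs_of_pos hτn.1] at this
      exact this
  -- norm of x k
  have hnorm : ∀ k, 1 ≤ k → ‖x k‖ = τ k := by
    intro k hk
    have hτk := hpos k hk
    apply le_antisymm
    · apply lp.norm_le_of_forall_le hτk.1.le
      intro i
      rw [hcoord]
      by_cases h : i = k
      · subst h
        rw [if_pos rfl, Real.norm_eq_abs, abs_of_pos hτk.1]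
      · rw [if_neg h, norm_zero]
        exact hτk.1.le
    · have := lp.norm_apply_le_norm ENNReal.top_ne_zero (x k) k
      rw [hcoord, if_pos rfl, Real.norm_eq_abs, abs_of_pos hτk.1] at this
      exact this
  -- membership
  have hmem : ∀ n k, n ≤ k → x k ∈ XS n := by
    intro n k h; rw [hXS]; exact ⟨k, h, rfl⟩
  have hne : ∀ n, (XS n).Nonempty := fun n => ⟨x n, hmem n n le_rfl⟩
  have hbdd : ∀ n, 1 ≤ n → Bornology.IsBounded (XS n) := by
    intro n hn
    apply Bornology.IsBounded.subset (Metric.isBounded_closedBall (x := (0 : lp (fun _ : ℕ => ℝ) ⊤)) (r := 1/2))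
    intro y hy
    rw [hXS] at hy
    obtain ⟨k, hk, rfl⟩ := hy
    rw [Metric.mem_closedBall, dist_zero_right, hnorm k (by omega)]
    exact (hpos k (by omega)).2
  have hfin : ∀ m n, 1 ≤ m → 1 ≤ n →
      EMetric.hausdorffEdist (XS m) (XS n) ≠ ⊤ := by
    intro m n hm hn
    exact Metric.hausdorffEdist_ne_top_of_nonempty_of_bounded (hne m) (hne n)
      (hbdd m hm) (hbdd n hn)
  -- infDist
  have hinf : ∀ a m, 1 ≤ a → a ≤ m → Metric.infDist (x a) (XS (m + 1)) = τ a := by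
    intro a m ha ham
    apply le_antisymm
    · have h1 : dist (x a) (x (m + 1)) = τ a := by
        rw [dist_comm]; exact hdist (m + 1) a ha (by omega)
      calc Metric.infDist (x a) (XS (m + 1)) ≤ dist (x a) (x (m + 1)) :=
            Metric.infDist_le_dist_of_mem (hmem (m + 1) (m + 1) le_rfl)
        _ = τ a := h1
    · by_contra h
      push_neg at h
      rw [Metric.infDist_lt_iff (hne (m + 1))] at h
      obtain ⟨y, hy, hlt⟩ := h
      rw [hXS] at hy
      obtain ⟨k, hk, rfl⟩ := hy
      rw [dist_comm, hdist k a ha (by omega)] at hlt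
      exact lt_irrefl _ hlt
  -- Hausdorff equality
  have hH : ∀ m n, 1 ≤ n → n < m →
      Metric.hausdorffDist (XS (m + 1)) (XS (n + 1)) = τ (n + 1) := by
    intro m n hn hnm
    have hτ := hpos (n + 1) (by omega)
    apply le_antisymm
    · apply Metric.hausdorffDist_le_of_mem_dist hτ.1.le
      · intro p hp
        rw [hXS] at hp
        obtain ⟨k, hk, rfl⟩ := hp
        exact ⟨x k, hmem (n + 1) k (by omega), by simp [hτ.1.le]⟩
      · intro p hp
        rw [hXS] at hp
        obtain ⟨k, hk, rfl⟩ := hp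
        rcases Nat.lt_or_ge k (m + 1) with h | h
        · refine ⟨x (m + 1), hmem (m + 1) (m + 1) le_rfl, ?_⟩
          rw [dist_comm, hdist (m + 1) k (by omega) (by omega)]
          exact hanti (n + 1) k (by omega) hk
        · exact ⟨x k, hmem (m + 1) k h, by simp [hτ.1.le]⟩
    · have h1 : Metric.infDist (x (n + 1)) (XS (m + 1)) ≤
          Metric.hausdorffDist (XS (n + 1)) (XS (m + 1)) :=
        Metric.infDist_le_hausdorffDist_of_mem (hmem (n + 1) (n + 1) le_rfl)
          (hfin (n + 1) (m + 1) (by omega) (by omega))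
      rw [hinf (n + 1) m (by omega) (by omega)] at h1
      rwa [Metric.hausdorffDist_comm] at h1
  -- RHS equality for m > n
  have hrhs : ∀ m n, 1 ≤ n → n < m →
      τ (n + 1) = α (dist (x m) (x n)) * dist (x m) (x n) := by
    intro m n hn hnm
    rw [hdist m n hn hnm, hα_tau n hn, hτ_rec n hn]
  refine ⟨?_, fun m n hn hnm => ⟨hH m n hn hnm, hrhs m n hn hnm⟩⟩
  intro m n hm hn
  rcases lt_trichotomy n m with h | h | h
  · rw [hH m n hn h, hrhs m n hn h]
  · subst h
    simp [Metric.hausdorffDist_self_zero]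
  · rw [Metric.hausdorffDist_comm, dist_comm, hH n m hm h, hrhs n m hm h]
end

section
/- Let (τ_n) be the sequence defined by τ_1 = 1/2 and τ_{n+1} = (1 − τ_n) τ_n, let x_n = τ_n e_n in ℓ^∞, let X_n = {x_k : k ≥ n}, and define T by T x_n = X_{n+1}. Then for every positive integer k there is no constant r ∈ [0,1) such that H(T x_m, T x_n) ≤ r · d(x_m, x_n) for all m > n ≥ k; equivalently, for every r ∈ [0,1) and every k there exists n ≥ k with τ_n (1 − τ_n) > r τ_n. -/
/-- With `τ₁ = 1/2`, `τ_{n+1} = (1 - τₙ) τₙ`, `xₙ = τₙ eₙ` in `ℓ^∞`,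
`Xₙ = {x_k : k ≥ n}` and `T xₙ = X_{n+1}`, for every `k ≥ 1` there is no constant
`r ∈ [0,1)` with `H(T xₘ, T xₙ) ≤ r · d(xₘ, xₙ)` for all `m > n ≥ k`; equivalently, for
every `r ∈ [0,1)` and every `k ≥ 1` there exists `n ≥ k` with `τₙ (1 - τₙ) > r τₙ`. -/
theorem example_not_nadler_contraction
    (τ : ℕ → ℝ) (hτ1 : τ 1 = 1 / 2)
    (hτ_rec : ∀ n, 1 ≤ n → τ (n + 1) = (1 - τ n) * τ n)
    (e : ℕ → lp (fun _ : ℕ => ℝ) ⊤) (he : ∀ n, e n = lp.single ⊤ n (1 : ℝ))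
    (x : ℕ → lp (fun _ : ℕ => ℝ) ⊤) (hx : ∀ n, x n = τ n • e n)
    (XS : ℕ → Set (lp (fun _ : ℕ => ℝ) ⊤)) (hXS : ∀ n, XS n = {y | ∃ k, n ≤ k ∧ y = x k}) :
    (∀ k, 1 ≤ k → ¬ ∃ r : ℝ, 0 ≤ r ∧ r < 1 ∧
      ∀ m n, k ≤ n → n < m →
        Metric.hausdorffDist (XS (m + 1)) (XS (n + 1)) ≤ r * dist (x m) (x n)) ∧
    (∀ r : ℝ, 0 ≤ r → r < 1 → ∀ k, 1 ≤ k → ∃ n, k ≤ n ∧ τ n * (1 - τ n) > r * τ n) := by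
  -- Basic bounds on τ
  have key : ∀ n, 1 ≤ n → 0 < τ n ∧ τ n ≤ 1 / (n + 1) := by
    intro n hn
    induction n, hn using Nat.le_induction with
    | base => rw [hτ1]; norm_num
    | succ n hn ih =>
      obtain ⟨hpos, hle⟩ := ih
      have hhalf : τ n ≤ 1 / 2 := by
        refine hle.trans ?_
        have : (1:ℝ) ≤ n := by exact_mod_cast hn
        rw [div_le_div_iff₀ (by linarith) (by norm_num)]
        linarith
      rw [hτ_rec n hn]
      constructor
      · apply mul_pos (by linarith) hpos
      · set N : ℝ := (n : ℝ) + 1 with hN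
        have hn1 : (1:ℝ) ≤ n := by exact_mod_cast hn
        have hN2 : 2 ≤ N := by rw [hN]; linarith
        have hN0 : (0:ℝ) < N := by linarith
        set c : ℝ := 1 / N with hcdef
        have hcN : c * N = 1 := by rw [hcdef]; field_simp
        have hct : τ n ≤ c := hle
        have hc2 : c ≤ 1/2 := by
          rw [hcdef, div_le_div_iff₀ hN0 (by norm_num)]; linarith
        have hc0 : 0 < c := by rw [hcdef]; positivity
        have step1 : (1 - τ n) * τ n ≤ (1 - c) * c := by
          nlinarith [mul_nonneg (sub_nonneg.2 hct) (show (0:ℝ) ≤ 1 - c - τ n by linarith)]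
        have h3 : c * (c * N) = c * 1 := by rw [hcN]
        have step2 : (1 - c) * c ≤ 1 / (N + 1) := by
          rw [le_div_iff₀ (by linarith)]
          nlinarith [sq_nonneg c, hcN, h3]
        have : ((n:ℕ)+1 : ℝ) + 1 = N + 1 := by push_cast; rw [hN]
        push_cast
        rw [show ((n:ℝ) + 1) + 1 = N + 1 from by rw [hN]]
        linarith
  -- Part 2
  have part2 : ∀ r : ℝ, 0 ≤ r → r < 1 → ∀ k, 1 ≤ k → ∃ n, k ≤ n ∧ τ n * (1 - τ n) > r * τ n := by
    intro r hr0 hr1 k hk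
    obtain ⟨M, hM⟩ := exists_nat_gt (1 / (1 - r))
    refine ⟨max k M, le_max_left _ _, ?_⟩
    set n := max k M with hn
    have hn1 : 1 ≤ n := le_trans hk (le_max_left _ _)
    obtain ⟨hpos, hle⟩ := key n hn1
    have hMn : (M:ℝ) ≤ n := by exact_mod_cast le_max_right k M
    have h1r : (0:ℝ) < 1 - r := by linarith
    have : τ n < 1 - r := by
      have : 1 / (1 - r) < (n:ℝ) + 1 := by linarith
      have h2 : 1 / ((n:ℝ) + 1) < 1 - r := by
        rw [div_lt_iff₀ (by positivity)]
        rw [div_lt_iff₀ h1r] at this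
        linarith
      linarith
    nlinarith
  refine ⟨?_, part2⟩
  -- Part 1
  intro k hk ⟨r, hr0, hr1, hcon⟩
  obtain ⟨n, hkn, hgt⟩ := part2 r hr0 hr1 k hk
  have hn1 : 1 ≤ n := le_trans hk hkn
  have hτn := key n hn1
  have hτn1 := key (n+1) (by omega)
  -- norm of x j at coordinate i
  have hcoord : ∀ j i, (x j : ∀ _ : ℕ, ℝ) i = if i = j then τ j else 0 := by
    intro j i
    rw [hx j, lp.coeFn_smul, Pi.smul_apply, he j]
    by_cases h : i = j
    · subst h; rw [lp.single_apply_self]; simp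
    · rw [lp.single_apply_ne _ _ _ h, if_neg h]; simp
  -- dist (x m) (x n) ≤ τ n  whenever n ≤ m, 1 ≤ n
  have hdist : ∀ m j, 1 ≤ j → j ≤ m → dist (x m) (x j) ≤ τ j := by
    intro m j hj1 hjm
    rw [dist_eq_norm]
    apply lp.norm_le_of_forall_le (key j hj1).1.le
    intro i
    rw [lp.coeFn_sub, Pi.sub_apply, hcoord, hcoord]
    have hmono : ∀ a b : ℕ, 1 ≤ a → a ≤ b → τ b ≤ τ a := by
      intro a b ha hab
      induction b, hab using Nat.le_induction with
      | base => exact le_rfl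
      | succ b hab ih =>
        have hb1 : 1 ≤ b := le_trans ha hab
        rw [hτ_rec b hb1]
        nlinarith [ih, (key b hb1).1, (key b hb1).2]
    have hτj0 : 0 ≤ τ j := (key j hj1).1.le
    by_cases h1 : i = m <;> by_cases h2 : i = j
    · rw [if_pos h1, if_pos h2]
      have : m = j := h1 ▸ h2 ▸ rfl
      subst this
      simpa using hτj0
    · rw [if_pos h1, if_neg h2, sub_zero, Real.norm_eq_abs,
        abs_of_nonneg (key m (le_trans hj1 hjm)).1.le]
      exact hmono j m hj1 hjm
    · rw [if_neg h1, if_pos h2, zero_sub, norm_neg, Real.norm_eq_abs, abs_of_nonneg hτj0]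
    · rw [if_neg h1, if_neg h2, sub_zero, norm_zero]
      exact hτj0
  -- nonemptiness and boundedness of XS
  have hmem : ∀ j, x j ∈ XS j := by intro j; rw [hXS]; exact ⟨j, le_refl j, rfl⟩
  have hne : ∀ j, (XS j).Nonempty := fun j => ⟨x j, hmem j⟩
  have hnorm_le : ∀ j, 1 ≤ j → ‖x j‖ ≤ 1 := by
    intro j hj
    apply lp.norm_le_of_forall_le zero_le_one
    intro i
    rw [hcoord]
    by_cases h : i = j
    · simp [h, Real.norm_eq_abs, abs_of_nonneg (key j hj).1.le]
      have := (key j hj).2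
      have : τ j ≤ 1/2 := by
        refine (key j hj).2.trans ?_
        have : (1:ℝ) ≤ j := by exact_mod_cast hj
        rw [div_le_div_iff₀ (by linarith) (by norm_num)]
        linarith
      linarith
    · simp [h]
  have hbdd : ∀ j, 1 ≤ j → Bornology.IsBounded (XS j) := by
    intro j hj
    apply Bornology.IsBounded.subset (Metric.isBounded_closedBall (x := (0 : lp (fun _ : ℕ => ℝ) ⊤)) (r := 1))
    intro y hy
    rw [hXS] at hy
    obtain ⟨m, hm, rfl⟩ := hy
    rw [Metric.mem_closedBall, dist_zero_right]
    exact hnorm_le m (le_trans hj hm)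
  have hfin : EMetric.hausdorffEdist (XS (n+1+1)) (XS (n+1)) ≠ ⊤ :=
    Metric.hausdorffEdist_ne_top_of_nonempty_of_bounded (hne _) (hne _)
      (hbdd (n+1+1) (by omega)) (hbdd (n+1) (by omega))
  -- lower bound: τ (n+1) ≤ infDist (x (n+1)) (XS (n+2))
  have hlow : τ (n+1) ≤ Metric.infDist (x (n+1)) (XS (n+1+1)) := by
    by_contra h
    push_neg at h
    rw [Metric.infDist_lt_iff (hne _)] at h
    obtain ⟨y, hy, hdy⟩ := h
    rw [hXS] at hy
    obtain ⟨m, hm, rfl⟩ := hy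
    have : τ (n+1) ≤ dist (x (n+1)) (x m) := by
      have h1 : ‖((x (n+1) - x m : lp (fun _ : ℕ => ℝ) ⊤) : ∀ _ : ℕ, ℝ) (n+1)‖ ≤ ‖x (n+1) - x m‖ :=
        lp.norm_apply_le_norm ENNReal.top_ne_zero _ _
      rw [dist_eq_norm]
      refine le_trans ?_ h1
      rw [lp.coeFn_sub, Pi.sub_apply, hcoord, hcoord]
      have hmne : ¬ (n+1 = m) := by omega
      simp [hmne, Real.norm_eq_abs, abs_of_nonneg hτn1.1.le]
    linarith
  -- now combine
  have hH : Metric.hausdorffDist (XS (n+1+1)) (XS (n+1)) ≤ r * dist (x (n+1)) (x n) :=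
    hcon (n+1) n hkn (by omega)
  have hinf_le : Metric.infDist (x (n+1)) (XS (n+1+1)) ≤
      Metric.hausdorffDist (XS (n+1+1)) (XS (n+1)) := by
    rw [Metric.hausdorffDist_comm]
    exact Metric.infDist_le_hausdorffDist_of_mem (hmem (n+1))
      (by rw [EMetric.hausdorffEdist_comm]; exact hfin)
  have hd : dist (x (n+1)) (x n) ≤ τ n := hdist (n+1) n hn1 (by omega)
  have hτrec : τ (n+1) = (1 - τ n) * τ n := hτ_rec n hn1
  have : r * dist (x (n+1)) (x n) ≤ r * τ n := by
    apply mul_le_mul_of_nonneg_left hd hr0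
  nlinarith
end

section
/- Let (τ_n) be the sequence defined by τ_1 = 1/2 and τ_{n+1} = (1 − τ_n) τ_n, and define α : [0,∞) → [0,1) by α(t) = 1 − τ_n if t = τ_n for some positive integer n, and α(t) = 0 otherwise. Then: (1) for every sequence (t_n) of nonnegative reals, α(t_n) → 1 implies t_n → 0; and (2) limsup_{t→0⁺} α(t) = 1, so α does not satisfy the condition limsup_{s→t⁺} α(s) < 1 at t = 0 required in Mizoguchi and Takahashi's theorem. -/
/-- With `τ₁ = 1/2`, `τ_{n+1} = (1 - τₙ) τₙ` and `α(t) = 1 - τₙ` if `t = τₙ` for some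
`n ≥ 1`, `α(t) = 0` otherwise: (1) `α` satisfies the Geraghty condition (`α tₙ → 1`
implies `tₙ → 0` for sequences of nonnegative reals); and (2) `limsup_{t → 0⁺} α t = 1`,
so `α` fails the Mizoguchi–Takahashi condition `limsup_{s → t⁺} α s < 1` at `t = 0`. -/
theorem example_alpha_geraghty_not_mizoguchi_takahashi
    (τ : ℕ → ℝ) (hτ1 : τ 1 = 1 / 2)
    (hτ_rec : ∀ n, 1 ≤ n → τ (n + 1) = (1 - τ n) * τ n)
    (α : ℝ → ℝ)
    (hα_tau : ∀ n, 1 ≤ n → α (τ n) = 1 - τ n)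
    (hα_other : ∀ t : ℝ, (∀ n, 1 ≤ n → t ≠ τ n) → α t = 0) :
    (∀ t : ℕ → ℝ, (∀ n, 0 ≤ t n) →
      Filter.Tendsto (fun n => α (t n)) Filter.atTop (nhds 1) →
      Filter.Tendsto t Filter.atTop (nhds 0)) ∧
    (Filter.limsup α (nhdsWithin 0 (Set.Ioi 0)) = 1 ∧
      ¬ Filter.limsup α (nhdsWithin 0 (Set.Ioi 0)) < 1) := by
  -- basic bounds
  have key : ∀ n, 1 ≤ n → 0 < τ n ∧ τ n ≤ 1 / (n + 1 : ℝ) := by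
    intro n hn
    induction n, hn using Nat.le_induction with
    | base => rw [hτ1]; norm_num
    | succ n hn ih =>
      obtain ⟨h1, h2⟩ := ih
      have hc : (1 : ℝ) ≤ (n : ℝ) := by exact_mod_cast hn
      have hhalf : τ n ≤ 1 / 2 := by
        calc τ n ≤ 1 / ((n : ℝ) + 1) := h2
        _ ≤ 1 / 2 := by
          apply one_div_le_one_div_of_le <;> linarith
      rw [hτ_rec n hn]
      constructor
      · apply mul_pos <;> linarith
      · have h2' : τ n * ((n : ℝ) + 1) ≤ 1 := by
          rw [le_div_iff₀ (by positivity)] at h2; linarith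
        push_cast
        rw [le_div_iff₀ (by positivity)]
        nlinarith [sq_nonneg (((n : ℝ) + 1) * τ n - 1), mul_pos h1 h1]
  have hpos : ∀ n, 1 ≤ n → 0 < τ n := fun n hn => (key n hn).1
  have hle : ∀ n, 1 ≤ n → τ n ≤ 1 / 2 := by
    intro n hn
    have hc : (1 : ℝ) ≤ (n : ℝ) := by exact_mod_cast hn
    calc τ n ≤ 1 / ((n : ℝ) + 1) := (key n hn).2
    _ ≤ 1 / 2 := by apply one_div_le_one_div_of_le <;> linarith
  have hαle : ∀ s : ℝ, α s ≤ 1 := by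
    intro s
    by_cases h : ∀ n, 1 ≤ n → s ≠ τ n
    · rw [hα_other s h]; norm_num
    · push_neg at h
      obtain ⟨n, hn, rfl⟩ := h
      rw [hα_tau n hn]
      have := hpos n hn; linarith
  -- τ tends to 0
  have htend : Filter.Tendsto τ Filter.atTop (nhds 0) := by
    apply squeeze_zero' (Filter.eventually_atTop.2 ⟨1, fun n hn => (hpos n hn).le⟩)
      (Filter.eventually_atTop.2 ⟨1, fun n hn => (key n hn).2⟩)
    exact tendsto_one_div_add_atTop_nhds_zero_nat
  -- small τ exists
  have hsmall : ∀ ε : ℝ, 0 < ε → ∃ N, 1 ≤ N ∧ τ N < ε := by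
    intro ε hε
    have := htend.eventually (eventually_lt_nhds hε)
    rw [Filter.eventually_atTop] at this
    obtain ⟨N, hN⟩ := this
    exact ⟨max N 1, le_max_right _ _, hN _ (le_max_left _ _)⟩
  refine ⟨?_, ?_⟩
  · -- Geraghty condition
    intro t ht htend1
    rw [NormedAddCommGroup.tendsto_nhds_zero]
    intro ε hε
    obtain ⟨N, hN1, hNε⟩ := hsmall ε hε
    have hev : ∀ᶠ n in Filter.atTop, 1 - τ N < α (t n) :=
      htend1 (Ioi_mem_nhds (by linarith [hpos N hN1]))
    filter_upwards [hev] with n hn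
    have hne : ¬ (∀ m, 1 ≤ m → t n ≠ τ m) := by
      intro h
      rw [hα_other _ h] at hn
      have := hle N hN1; linarith
    push_neg at hne
    obtain ⟨m, hm, hmeq⟩ := hne
    rw [hmeq, hα_tau m hm] at hn
    have : τ m < τ N := by linarith
    rw [Real.norm_eq_abs, abs_of_nonneg (ht n), hmeq]
    linarith
  · -- limsup = 1
    have hNe : (nhdsWithin (0:ℝ) (Set.Ioi 0)).NeBot := by infer_instance
    have hτtend : Filter.Tendsto (fun n => τ (n + 1)) Filter.atTop
        (nhdsWithin (0:ℝ) (Set.Ioi 0)) := by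
      apply tendsto_nhdsWithin_of_tendsto_nhds_of_eventually_within
      · exact htend.comp (Filter.tendsto_add_atTop_nat 1)
      · exact Filter.Eventually.of_forall fun n => hpos (n + 1) (Nat.le_add_left 1 n)
    have hlimsup : Filter.limsup α (nhdsWithin 0 (Set.Ioi 0)) = 1 := by
      have hbdd : Filter.IsBoundedUnder (· ≤ ·) (nhdsWithin (0:ℝ) (Set.Ioi 0)) α :=
        Filter.isBoundedUnder_of ⟨1, fun s => hαle s⟩
      apply le_antisymm
      · apply Filter.limsup_le_of_le ?_ (Filter.Eventually.of_forall fun s => hαle s)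
        apply Filter.IsCoboundedUnder.of_frequently_ge (a := (0:ℝ))
        apply (hτtend.frequently (Filter.Eventually.frequently
          (Filter.Eventually.of_forall (fun n : ℕ => ?_)))) 
        rw [hα_tau (n + 1) (Nat.le_add_left 1 n)]
        have := hle (n + 1) (Nat.le_add_left 1 n); linarith
      · apply le_of_forall_sub_le
        intro ε hε
        apply Filter.le_limsup_of_frequently_le ?_ hbdd
        apply hτtend.frequently
        apply Filter.Eventually.frequently
        have : ∀ᶠ n in Filter.atTop, τ (n + 1) < ε := by
          have := (htend.comp (Filter.tendsto_add_atTop_nat 1)).eventually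
            (eventually_lt_nhds hε)
          exact this
        filter_upwards [this] with n hn
        rw [hα_tau (n + 1) (Nat.le_add_left 1 n)]
        linarith
    refine ⟨hlimsup, by rw [hlimsup]; exact lt_irrefl 1⟩
end
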